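/- Let f : ℝ^n → ℝ be differentiable with L-Lipschitz gradient, let c ∈ (0,1), α > 0, κ₁, κ₂, κ₃ > 0, and let x, s, g, F ∈ appropriate Euclidean spaces with J, J̃ matrices such that ∇f(x) = J^T F, g = J̃^T F, ‖J − J̃‖ ≤ α t (spectral norm), ‖F‖ ≤ κ₃ ‖g‖, κ₂ ‖g‖ ≤ ‖s‖, and −g^T s ≥ (1/κ₁) ‖s‖². If 0 < t ≤ 2(1−c)κ₂ / ((L κ₂ + 2 α κ₃) κ₁), then f(x + t s) ≤ f(x) + c t s^T g. -/

import Mathlib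

open scoped RealInnerProductSpace
open Matrix

noncomputable def specNorm {m n : ℕ} (A : Matrix (Fin m) (Fin n) ℝ) : ℝ :=
  ‖LinearMap.toContinuousLinearMap (Matrix.toEuclideanLin A)‖

lemma descent_lemma {n : ℕ} (f : EuclideanSpace ℝ (Fin n) → ℝ) (hf : Differentiable ℝ f)
    (L : ℝ) (hL : ∀ x y, ‖gradient f x - gradient f y‖ ≤ L * ‖x - y‖)
    (x v : EuclideanSpace ℝ (Fin n)) :
    f (x + v) ≤ f x + ⟪gradient f x, v⟫ + L / 2 * ‖v‖ ^ 2 := by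
  set φ : ℝ → ℝ := fun u => f (x + u • v) - u * ⟪gradient f x, v⟫ - L / 2 * u ^ 2 * ‖v‖ ^ 2
    with hφ
  have hφ' : ∀ u : ℝ, HasDerivAt φ
      (⟪gradient f (x + u • v), v⟫ - ⟪gradient f x, v⟫ - L * u * ‖v‖ ^ 2) u := by
    intro u
    have h1 : HasDerivAt (fun u : ℝ => x + u • v) v u := by
      simpa using ((hasDerivAt_id u).smul_const v).const_add x
    have h2 : HasDerivAt (fun u : ℝ => f (x + u • v)) ⟪gradient f (x + u • v), v⟫ u := by
      have := ((hf _).hasGradientAt.hasFDerivAt.comp_hasDerivAt u h1)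
      simp [InnerProductSpace.toDual_apply_apply] at this ⊢
      exact this
    have h3 : HasDerivAt (fun u : ℝ => u * ⟪gradient f x, v⟫) ⟪gradient f x, v⟫ u := by
      simpa using (hasDerivAt_id u).mul_const ⟪gradient f x, v⟫
    have h4 : HasDerivAt (fun u : ℝ => L / 2 * u ^ 2 * ‖v‖ ^ 2) (L * u * ‖v‖ ^ 2) u := by
      have := ((hasDerivAt_pow 2 u).const_mul (L / 2)).mul_const (‖v‖ ^ 2)
      refine this.congr_deriv ?_
      ring
    exact (h2.sub h3).sub h4
  have key : φ 1 ≤ φ 0 := by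
    have := antitoneOn_of_deriv_nonpos (convex_Icc (0:ℝ) 1)
      (fun u _ => ((hφ' u).continuousAt).continuousWithinAt)
      (fun u _ => ((hφ' u).differentiableAt).differentiableWithinAt)
      (fun u hu => by
        rw [(hφ' u).deriv]
        rw [interior_Icc] at hu
        have hu0 : 0 ≤ u := le_of_lt hu.1
        have hkey : ⟪gradient f (x + u • v) - gradient f x, v⟫ ≤ L * u * ‖v‖ ^ 2 :=
          calc ⟪gradient f (x + u • v) - gradient f x, v⟫
              ≤ ‖gradient f (x + u • v) - gradient f x‖ * ‖v‖ := real_inner_le_norm _ _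
            _ ≤ (L * ‖(x + u • v) - x‖) * ‖v‖ := by
                have := hL (x + u • v) x
                nlinarith [norm_nonneg v]
            _ = L * u * ‖v‖ ^ 2 := by
                have : x + u • v - x = u • v := by abel
                rw [this, norm_smul, Real.norm_eq_abs, abs_of_nonneg hu0]
                ring
        have hexp := inner_sub_left (𝕜 := ℝ) (gradient f (x + u • v)) (gradient f x) v
        linarith)
    exact this (Set.left_mem_Icc.2 zero_le_one) (Set.right_mem_Icc.2 zero_le_one) zero_le_one
  simp only [hφ, one_smul, zero_smul, add_zero, one_pow, zero_pow, mul_zero, zero_mul,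
    one_mul, sub_zero, mul_one] at key
  linarith


lemma adjoint_inner {m n : ℕ} (A : Matrix (Fin m) (Fin n) ℝ)
    (F : EuclideanSpace ℝ (Fin m)) (s : EuclideanSpace ℝ (Fin n)) :
    ⟪Matrix.toEuclideanLin Aᵀ F, s⟫ = ⟪F, Matrix.toEuclideanLin A s⟫ := by
  rw [← Matrix.conjTranspose_eq_transpose_of_trivial,
    Matrix.toEuclideanLin_conjTranspose_eq_adjoint]
  exact LinearMap.adjoint_inner_left _ _ _

lemma specNorm_bound {m n : ℕ} (A : Matrix (Fin m) (Fin n) ℝ) (s : EuclideanSpace ℝ (Fin n)) :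
    ‖Matrix.toEuclideanLin A s‖ ≤ specNorm A * ‖s‖ :=
  (LinearMap.toContinuousLinearMap (Matrix.toEuclideanLin A)).le_opNorm s


lemma armijo_arith (L c α κ₁ κ₂ κ₃ t C gs S G fx fxs : ℝ)
    (hc1 : c < 1) (hα : 0 < α) (hκ₁ : 0 < κ₁) (hκ₂ : 0 < κ₂) (hκ₃ : 0 < κ₃)
    (hL0 : 0 ≤ L) (ht0 : 0 < t) (hG : 0 ≤ G) (hS : 0 ≤ S)
    (hcross : C ≤ α * t * κ₃ * G * S)
    (hlow : κ₂ * G ≤ S)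
    (hgs2 : S ^ 2 ≤ κ₁ * (-gs))
    (ht' : t * ((L * κ₂ + 2 * α * κ₃) * κ₁) ≤ 2 * (1 - c) * κ₂)
    (hds : fxs ≤ fx + t * (C + gs) + L / 2 * (t ^ 2 * S ^ 2)) :
    fxs ≤ fx + c * t * gs := by
  have h1 : C * κ₂ ≤ α * t * κ₃ * S ^ 2 := by
    have q1 := mul_le_mul_of_nonneg_right hcross hκ₂.le
    have q2 := mul_le_mul_of_nonneg_left hlow (by positivity : (0:ℝ) ≤ α * t * κ₃ * S)
    nlinarith
  have hq : (0:ℝ) < κ₂ * κ₁ := by positivity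
  have hc1' : (0:ℝ) < 1 - c := by linarith
  have p1 := mul_le_mul_of_nonneg_left h1 (by positivity : (0:ℝ) ≤ t * κ₁)
  have p2 := mul_le_mul_of_nonneg_left hgs2 (by positivity : (0:ℝ) ≤ (1 - c) * t * κ₂)
  have p3 := mul_le_mul_of_nonneg_right ht' (by positivity : (0:ℝ) ≤ t * S ^ 2 / 2)
  have hmul : (t * (C + gs) + L / 2 * (t ^ 2 * S ^ 2)) * (κ₂ * κ₁)
      ≤ (c * t * gs) * (κ₂ * κ₁) := by nlinarith
  have hfin := le_of_mul_le_mul_right hmul hq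
  linarith

/-- Armijo fulfillment lemma for the Jacobian-sampling variant: with
`∇f(x) = JᵀF`, `g = J̃ᵀF`, `‖J − J̃‖ ≤ α t` (spectral norm), `‖F‖ ≤ κ₃‖g‖`,
`κ₂‖g‖ ≤ ‖s‖`, `−gᵀs ≥ (1/κ₁)‖s‖²`, and `0 < t ≤ 2(1−c)κ₂/((Lκ₂ + 2ακ₃)κ₁)`,
the Armijo condition `f(x + ts) ≤ f(x) + c t sᵀg` holds. -/
theorem armijo_fulfillment_jacobian_sampling (m n : ℕ)
    (f : EuclideanSpace ℝ (Fin n) → ℝ) (hf : Differentiable ℝ f) (L : ℝ)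
    (hL : ∀ x y, ‖gradient f x - gradient f y‖ ≤ L * ‖x - y‖)
    (c α κ₁ κ₂ κ₃ : ℝ) (hc0 : 0 < c) (hc1 : c < 1) (hα : 0 < α)
    (hκ₁ : 0 < κ₁) (hκ₂ : 0 < κ₂) (hκ₃ : 0 < κ₃)
    (x s g : EuclideanSpace ℝ (Fin n)) (F : EuclideanSpace ℝ (Fin m))
    (J Jtil : Matrix (Fin m) (Fin n) ℝ) (t : ℝ)
    (hgrad : gradient f x = Matrix.toEuclideanLin Jᵀ F)
    (hg : g = Matrix.toEuclideanLin Jtilᵀ F)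
    (hJ : specNorm (J - Jtil) ≤ α * t)
    (hF : ‖F‖ ≤ κ₃ * ‖g‖)
    (hlow : κ₂ * ‖g‖ ≤ ‖s‖)
    (hdesc : -⟪g, s⟫ ≥ (1 / κ₁) * ‖s‖ ^ 2)
    (ht0 : 0 < t) (htsmall : t ≤ 2 * (1 - c) * κ₂ / ((L * κ₂ + 2 * α * κ₃) * κ₁)) :
    f (x + t • s) ≤ f x + c * t * ⟪s, g⟫ := by
  -- s = 0 case
  by_cases hs : s = 0
  · simp [hs]
  have hS0 : 0 < ‖s‖ := norm_pos_iff.2 hs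
  -- L ≥ 0
  have hL0 : 0 ≤ L := by
    have := hL x (x + s)
    have h2 : ‖x - (x + s)‖ = ‖s‖ := by
      rw [show x - (x + s) = -s by abel, norm_neg]
    rw [h2] at this
    nlinarith [norm_nonneg (gradient f x - gradient f (x + s))]
  -- decompose gradient
  have hdecomp : gradient f x = Matrix.toEuclideanLin (J - Jtil)ᵀ F + g := by
    rw [hgrad, hg, Matrix.transpose_sub, map_sub, LinearMap.sub_apply]
    abel
  -- cross term bound
  set D := J - Jtil with hD
  have hcross : ⟪Matrix.toEuclideanLin Dᵀ F, s⟫ ≤ α * t * κ₃ * ‖g‖ * ‖s‖ := by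
    rw [adjoint_inner]
    calc ⟪F, Matrix.toEuclideanLin D s⟫ ≤ ‖F‖ * ‖Matrix.toEuclideanLin D s‖ :=
          real_inner_le_norm _ _
      _ ≤ ‖F‖ * (specNorm D * ‖s‖) := by
          have := specNorm_bound D s
          nlinarith [norm_nonneg F]
      _ ≤ α * t * κ₃ * ‖g‖ * ‖s‖ := by
          have hspec : 0 ≤ specNorm D := norm_nonneg _
          have h := mul_le_mul hF hJ hspec (by positivity : (0:ℝ) ≤ κ₃ * ‖g‖)
          nlinarith [norm_nonneg (s : EuclideanSpace ℝ (Fin n))]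
  -- descent lemma
  have hds := descent_lemma f hf L hL x (t • s)
  rw [norm_smul, Real.norm_eq_abs, abs_of_pos ht0, mul_pow] at hds
  have hinner : ⟪gradient f x, t • s⟫
      = t * (⟪Matrix.toEuclideanLin Dᵀ F, s⟫ + ⟪g, s⟫) := by
    rw [real_inner_smul_right, hdecomp, inner_add_left]
  rw [hinner] at hds
  rw [real_inner_comm g s]
  -- scalar arithmetic
  have hgs2 : ‖s‖ ^ 2 ≤ κ₁ * (-⟪g, s⟫) := by
    have h := mul_le_mul_of_nonneg_left hdesc hκ₁.le
    rw [← mul_assoc, mul_one_div_cancel hκ₁.ne', one_mul] at h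
    exact h
  have hden : 0 < (L * κ₂ + 2 * α * κ₃) * κ₁ := by positivity
  have ht' : t * ((L * κ₂ + 2 * α * κ₃) * κ₁) ≤ 2 * (1 - c) * κ₂ :=
    (le_div_iff₀ hden).mp htsmall
  exact armijo_arith L c α κ₁ κ₂ κ₃ t _ ⟪g, s⟫ ‖s‖ ‖g‖ (f x) (f (x + t • s))
    hc1 hα hκ₁ hκ₂ hκ₃ hL0 ht0 (norm_nonneg g) (norm_nonneg s)
    hcross hlow hgs2 ht' hds
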